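/- Let (Ω, μ) be a probability space, let q be a natural number, let B : Fin q → Set Ω be measurable sets, and let e denote Euler's number (Real.exp 1). Assume that for every index i : Fin q and every finite set S of indices all strictly smaller than i, μ(B i ∩ ⋂_{k ∈ S} B k) ≤ (1/(16e)) · μ(⋂_{k ∈ S} B k). Then μ({ω : q ≤ 4 · |{i : ω ∈ B i}|}) ≤ (4/3) · (1/√2)^q, i.e., the probability that at least a 1/4-fraction of the q events occur is at most (4/3) · 2^{−q/2}. -/

import Mathlib

open MeasureTheory

/-- Abstract core of Lemma 3.8: given `q` events `B i`, each occurring with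
probability at most `1/(16e)` conditioned on any collection of earlier events
occurring, the probability that at least a `1/4`-fraction of them occur is at
most `(4/3)·2^{-q/2}`. -/
theorem stmt_1 {Ω : Type*} [MeasurableSpace Ω] (μ : Measure Ω) [IsProbabilityMeasure μ]
    (q : ℕ) (B : Fin q → Set Ω) (hB : ∀ i, MeasurableSet (B i))
    (h : ∀ (i : Fin q) (S : Finset (Fin q)), (∀ k ∈ S, k < i) →
      μ (B i ∩ ⋂ k ∈ S, B k) ≤
        ENNReal.ofReal (1 / (16 * Real.exp 1)) * μ (⋂ k ∈ S, B k)) :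
    μ {ω | q ≤ 4 * {i : Fin q | ω ∈ B i}.ncard} ≤
      ENNReal.ofReal ((4 / 3) * (1 / Real.sqrt 2) ^ q) := by
  classical
  set p : ENNReal := ENNReal.ofReal (1 / (16 * Real.exp 1)) with hp
  -- Step 1: intersection bound
  have key : ∀ T : Finset (Fin q), μ (⋂ k ∈ T, B k) ≤ p ^ T.card := by
    intro T
    induction T using Finset.induction_on_max with
    | empty => simp
    | insert a s hlt ih =>
      rw [Finset.card_insert_of_notMem (fun hm => lt_irrefl a (hlt a hm))]
      calc μ (⋂ k ∈ insert a s, B k) = μ (B a ∩ ⋂ k ∈ s, B k) := by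
            rw [Finset.set_biInter_insert]
        _ ≤ p * μ (⋂ k ∈ s, B k) := h a s hlt
        _ ≤ p * p ^ s.card := by exact mul_le_mul_right ih p
        _ = p ^ (s.card + 1) := by ring
  rcases Nat.eq_zero_or_pos q with rfl | hq
  · calc μ {ω | (0:ℕ) ≤ 4 * {i : Fin 0 | ω ∈ B i}.ncard} ≤ 1 := prob_le_one
      _ ≤ ENNReal.ofReal ((4 / 3) * (1 / Real.sqrt 2) ^ 0) := by
          rw [pow_zero, mul_one]
          rw [show (1:ENNReal) = ENNReal.ofReal 1 by simp]
          exact ENNReal.ofReal_le_ofReal (by norm_num)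
  set m : ℕ := (q + 3) / 4 with hm
  have hmq : q ≤ 4 * m := by omega
  have hm1 : 1 ≤ m := by omega
  -- Step 2: union bound
  have hsub : {ω | q ≤ 4 * {i : Fin q | ω ∈ B i}.ncard} ⊆
      ⋃ T ∈ Finset.powersetCard m (Finset.univ : Finset (Fin q)), ⋂ k ∈ T, B k := by
    intro ω hω
    simp only [Set.mem_setOf_eq] at hω
    have hfin : {i : Fin q | ω ∈ B i}.Finite := Set.toFinite _
    have hcard : m ≤ hfin.toFinset.card := by
      rw [Set.ncard_eq_toFinset_card' ] at hω
      have : hfin.toFinset = {i : Fin q | ω ∈ B i}.toFinset := by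
        ext i; simp
      rw [this]; omega
    obtain ⟨T, hTsub, hTcard⟩ := Finset.exists_subset_card_eq hcard
    refine Set.mem_biUnion (Finset.mem_powersetCard.2 ⟨Finset.subset_univ T, hTcard⟩) ?_
    simp only [Set.mem_iInter]
    intro k hk
    have := hTsub hk
    rw [Set.Finite.mem_toFinset] at this
    exact this
  have hunion : μ {ω | q ≤ 4 * {i : Fin q | ω ∈ B i}.ncard} ≤
      (Nat.choose q m : ENNReal) * p ^ m := by
    calc μ {ω | q ≤ 4 * {i : Fin q | ω ∈ B i}.ncard}
        ≤ μ (⋃ T ∈ Finset.powersetCard m (Finset.univ : Finset (Fin q)), ⋂ k ∈ T, B k) :=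
          measure_mono hsub
      _ ≤ ∑ T ∈ Finset.powersetCard m (Finset.univ : Finset (Fin q)), μ (⋂ k ∈ T, B k) :=
          measure_biUnion_finset_le _ _
      _ ≤ ∑ T ∈ Finset.powersetCard m (Finset.univ : Finset (Fin q)), p ^ m := by
          refine Finset.sum_le_sum fun T hT => ?_
          obtain ⟨_, hc⟩ := Finset.mem_powersetCard.1 hT
          rw [← hc]; exact key T
      _ = (Nat.choose q m : ENNReal) * p ^ m := by
          rw [Finset.sum_const, Finset.card_powersetCard, Finset.card_univ, Fintype.card_fin,
            nsmul_eq_mul]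
  refine hunion.trans ?_
  -- Step 3: arithmetic
  have hppos : (0:ℝ) ≤ 1 / (16 * Real.exp 1) := by positivity
  rw [hp, ← ENNReal.ofReal_pow hppos, ← ENNReal.ofReal_natCast, ← ENNReal.ofReal_mul (by positivity)]
  refine ENNReal.ofReal_le_ofReal ?_
  have hmm : (m:ℝ) ^ m / m.factorial ≤ Real.exp m := Real.pow_div_factorial_le_exp (x := (m:ℝ)) (by positivity) m
  have hfac : (m:ℝ)^m ≤ m.factorial * Real.exp 1 ^ m := by
    have hfpos : (0:ℝ) < m.factorial := by positivity
    rw [div_le_iff₀ hfpos] at hmm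
    calc (m:ℝ)^m ≤ Real.exp m * m.factorial := hmm
      _ = m.factorial * Real.exp 1 ^ m := by rw [← Real.exp_nat_mul, mul_one, mul_comm]
  have hchoose : (Nat.choose q m : ℝ) ≤ (q:ℝ)^m / m.factorial := Nat.choose_le_pow_div m q
  have hepos : (0:ℝ) < Real.exp 1 := Real.exp_pos 1
  have hmpos : (0:ℝ) < m := by exact_mod_cast hm1
  have step1 : (Nat.choose q m : ℝ) * (1 / (16 * Real.exp 1)) ^ m ≤ (1/4:ℝ) ^ m := by
    have h1 : (Nat.choose q m : ℝ) * (1 / (16 * Real.exp 1)) ^ m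
        ≤ ((q:ℝ)^m / m.factorial) * (1 / (16 * Real.exp 1)) ^ m := by
      apply mul_le_mul_of_nonneg_right hchoose (by positivity)
    refine h1.trans ?_
    have hfpos : (0:ℝ) < m.factorial := by positivity
    have h2 : (q:ℝ)^m ≤ (4*m:ℝ)^m := by
      apply pow_le_pow_left₀ (by positivity)
      exact_mod_cast hmq
    calc (q:ℝ)^m / m.factorial * (1 / (16 * Real.exp 1)) ^ m
        ≤ (4*m:ℝ)^m / m.factorial * (1 / (16 * Real.exp 1)) ^ m := by
          gcongr
      _ = (4:ℝ)^m * ((m:ℝ)^m / m.factorial) * (1 / (16 * Real.exp 1)) ^ m := by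
          rw [mul_pow]; ring
      _ ≤ (4:ℝ)^m * Real.exp 1 ^ m * (1 / (16 * Real.exp 1)) ^ m := by
          apply mul_le_mul_of_nonneg_right _ (by positivity)
          apply mul_le_mul_of_nonneg_left _ (by positivity)
          rw [div_le_iff₀ hfpos] at hmm
          calc (m:ℝ)^m / m.factorial ≤ Real.exp m := Real.pow_div_factorial_le_exp (x := (m:ℝ)) (by positivity) m
            _ = Real.exp 1 ^ m := by rw [← Real.exp_nat_mul, mul_one]
      _ = (1/4:ℝ)^m := by
          rw [← mul_pow, ← mul_pow]
          congr 1
          field_simp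
          ring
  have step2 : ((1:ℝ)/4) ^ m ≤ (1 / Real.sqrt 2) ^ q := by
    have hs2 : (0:ℝ) < Real.sqrt 2 := Real.sqrt_pos.2 (by norm_num)
    have h4 : ((1:ℝ)/4) = (1 / Real.sqrt 2) ^ 4 := by
      rw [div_pow, one_pow]
      congr 1
      rw [show (4:ℕ) = 2*2 by norm_num, pow_mul, Real.sq_sqrt (by norm_num)]
      norm_num
    rw [h4, ← pow_mul]
    apply pow_le_pow_of_le_one (by positivity) _ (by omega)
    rw [div_le_one hs2]
    nlinarith [Real.sq_sqrt (show (0:ℝ) ≤ 2 by norm_num), Real.sqrt_nonneg 2]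
  calc (Nat.choose q m : ℝ) * (1 / (16 * Real.exp 1)) ^ m ≤ (1/4:ℝ)^m := step1
    _ ≤ (1 / Real.sqrt 2) ^ q := step2
    _ ≤ (4/3) * (1 / Real.sqrt 2) ^ q := by nlinarith [pow_nonneg (le_of_lt (by positivity : (0:ℝ) < 1 / Real.sqrt 2)) q]
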